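/- Let r ≥ 3 be odd, d, m ≥ 1, N = (r−1)d + m(r²−1)/2, and N_0 = N/2. In the ring F_r[y_1,y_2]/(y_1^{N_0+1}, y_2^{N_0+1}), the polynomial p(y_1,y_2) = y_1^{d(r−1)/2} y_2^{d(r−1)/2} (y_1 y_2^r − y_2 y_1^r)^{m(r−1)/2} is nonzero if and only if the binomial coefficient C(m(r−1)/2, m(r−1)/4·2) = C(m', m'/2) is nonzero mod r, where m' = m(r−1)/2 is assumed even. -/

import Mathlib

open MvPolynomial

set_option maxHeartbeats 1000000 in
/-- in `F_r[y₁,y₂]/(y₁^{N₀+1}, y₂^{N₀+1})`, the class of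
`y₁^{d(r-1)/2} y₂^{d(r-1)/2} (y₁ y₂^r − y₂ y₁^r)^{m'}` is nonzero iff
`C(m', m'/2)` is nonzero mod `r`. -/
theorem stmt17 (r d m : ℕ) (hr : r.Prime) (h3 : 3 ≤ r) (hodd : Odd r)
    (hd : 1 ≤ d) (hm : 1 ≤ m)
    (N N₀ m' : ℕ)
    (hN : N = (r - 1) * d + m * ((r ^ 2 - 1) / 2))
    (hN0 : N₀ = N / 2)
    (hm' : m' = m * (r - 1) / 2) (heven : Even m') :
    let Q := Ideal.span
      {(X 0 ^ (N₀ + 1) : MvPolynomial (Fin 2) (ZMod r)), X 1 ^ (N₀ + 1)}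
    (Ideal.Quotient.mk Q
        (X 0 ^ (d * (r - 1) / 2) * X 1 ^ (d * (r - 1) / 2) *
          (X 0 * X 1 ^ r - X 1 * X 0 ^ r) ^ m') ≠ 0)
      ↔ (Nat.choose m' (m' / 2) : ZMod r) ≠ 0 := by
  intro Q
  haveI : Fact r.Prime := ⟨hr⟩
  obtain ⟨t, ht⟩ := hodd
  have ht1 : 1 ≤ t := by omega
  have hr1 : r - 1 = 2 * t := by omega
  have hDt : d * (r - 1) / 2 = d * t := by
    rw [hr1, show d * (2 * t) = 2 * (d * t) by ring, Nat.mul_div_cancel_left _ (by norm_num)]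
  have hmt : m' = m * t := by
    rw [hm', hr1, show m * (2 * t) = 2 * (m * t) by ring,
      Nat.mul_div_cancel_left _ (by norm_num)]
  have hsq : r ^ 2 = 2 * (t * (2 * t + 2)) + 1 := by rw [ht]; ring
  have hr2 : (r ^ 2 - 1) / 2 = t * (2 * t + 2) := by
    rw [hsq]; omega
  have hNeq : N = 2 * (d * t + m' * (t + 1)) := by
    rw [hN, hr1, hr2, hmt]; ring
  have hN0' : N₀ = d * t + m' * (t + 1) := by
    rw [hN0, hNeq, Nat.mul_div_cancel_left _ (by norm_num : 0 < 2)]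
  set mid := m' / 2 with hmiddef
  have hmid : mid + mid = m' := by
    obtain ⟨c, hc⟩ := heven; omega
  have e1 : N₀ = d * t + mid * (r + 1) := by
    rw [hN0', ← hmid, ht]; ring
  -- multiplication helper
  have hmul : ∀ a : ℕ, a * (r - 1) + a = a * r := by
    intro a
    have h := mul_add a (r - 1) 1
    rw [mul_one] at h
    rw [← h, show r - 1 + 1 = r by omega]
  -- membership helper
  have hQmem : ∀ (g : MvPolynomial (Fin 2) (ZMod r)) (j : Fin 2) (e : ℕ), N₀ + 1 ≤ e →
      g * X j ^ e ∈ Q := by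
    intro g j e he
    have hXe : (X j ^ e : MvPolynomial (Fin 2) (ZMod r))
        = X j ^ (e - (N₀ + 1)) * X j ^ (N₀ + 1) := by
      rw [← pow_add]; congr 1; omega
    rw [hXe, ← mul_assoc]
    refine Ideal.mul_mem_left _ _ (Ideal.subset_span ?_)
    fin_cases j
    · exact Set.mem_insert _ _
    · exact Set.mem_insert_iff.mpr (Or.inr rfl)
  set c : ZMod r := (-1) ^ (mid + m') * (m'.choose mid : ZMod r) with hcdef
  set E : MvPolynomial (Fin 2) (ZMod r) := X 0 ^ N₀ * X 1 ^ N₀ with hEdef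
  have key : Ideal.Quotient.mk Q
      (X 0 ^ (d * (r - 1) / 2) * X 1 ^ (d * (r - 1) / 2) *
        (X 0 * X 1 ^ r - X 1 * X 0 ^ r) ^ m')
      = Ideal.Quotient.mk Q (MvPolynomial.C c * E) := by
    rw [sub_pow, Finset.mul_sum, map_sum]
    rw [Finset.sum_eq_single mid]
    · congr 1
      rw [hDt, hEdef, hcdef, e1, show m' - mid = mid by omega]
      simp only [map_mul, map_pow, map_neg, map_one, map_natCast]
      ring
    · intro i hi hne
      rw [Finset.mem_range] at hi
      have him : i ≤ m' := by omega
      rw [Ideal.Quotient.eq_zero_iff_mem, hDt]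
      rcases lt_or_gt_of_ne hne with hlt | hgt
      · -- i < mid : X 0 exponent is big
        have h4 : mid * (r - 1) + 1 ≤ (m' - i) * (r - 1) := by
          have h5 := Nat.mul_le_mul_right (r - 1) (show mid + 1 ≤ m' - i by omega)
          rw [add_mul, one_mul] at h5
          omega
        have hb : N₀ + 1 ≤ d * t + (i + (m' - i) * r) := by
          have h6 := hmul (m' - i)
          have h7 := hmul mid
          have h8 : mid * (r + 1) = mid * r + mid := by ring
          omega
        have hre : X 0 ^ (d * t) * X 1 ^ (d * t) *
            ((-1) ^ (i + m') * (X 0 * X 1 ^ r) ^ i * (X 1 * X 0 ^ r) ^ (m' - i) *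
              ((m'.choose i : ℕ) : MvPolynomial (Fin 2) (ZMod r)))
            = ((-1) ^ (i + m') * ((m'.choose i : ℕ) : MvPolynomial (Fin 2) (ZMod r)) *
                X 1 ^ (d * t + (i * r + (m' - i)))) * X 0 ^ (d * t + (i + (m' - i) * r)) := by
          ring
        rw [hre]
        exact hQmem _ 0 _ hb
      · -- mid < i : X 1 exponent is big
        have h4 : mid * (r - 1) + 1 ≤ i * (r - 1) := by
          have h5 := Nat.mul_le_mul_right (r - 1) (show mid + 1 ≤ i by omega)
          rw [add_mul, one_mul] at h5
          omega
        have hb : N₀ + 1 ≤ d * t + (i * r + (m' - i)) := by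
          have h6 := hmul i
          have h7 := hmul mid
          have h8 : mid * (r + 1) = mid * r + mid := by ring
          omega
        have hre : X 0 ^ (d * t) * X 1 ^ (d * t) *
            ((-1) ^ (i + m') * (X 0 * X 1 ^ r) ^ i * (X 1 * X 0 ^ r) ^ (m' - i) *
              ((m'.choose i : ℕ) : MvPolynomial (Fin 2) (ZMod r)))
            = ((-1) ^ (i + m') * ((m'.choose i : ℕ) : MvPolynomial (Fin 2) (ZMod r)) *
                X 0 ^ (d * t + (i + (m' - i) * r))) * X 1 ^ (d * t + (i * r + (m' - i))) := by
          ring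
        rw [hre]
        exact hQmem _ 1 _ hb
    · intro habs
      exact absurd (Finset.mem_range.mpr (by omega)) habs
  -- the coefficient functional
  set s0 : Fin 2 →₀ ℕ := Finsupp.single 0 N₀ + Finsupp.single 1 N₀ with hs0
  have hcoeff : ∀ f ∈ Q, coeff s0 f = 0 := by
    intro f hf
    rw [Ideal.mem_span_pair] at hf
    obtain ⟨u, v, huv⟩ := hf
    rw [← huv, coeff_add]
    have h0 : coeff s0 (u * X 0 ^ (N₀ + 1)) = 0 := by
      rw [X_pow_eq_monomial, coeff_mul_monomial']
      rw [if_neg]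
      intro hle
      have := hle 0
      simp [hs0] at this
    have h1 : coeff s0 (v * X 1 ^ (N₀ + 1)) = 0 := by
      rw [X_pow_eq_monomial, coeff_mul_monomial']
      rw [if_neg]
      intro hle
      have := hle 1
      simp [hs0] at this
    rw [h0, h1, add_zero]
  have hEco : coeff s0 E = 1 := by
    rw [hEdef, X_pow_eq_monomial, X_pow_eq_monomial, monomial_mul, one_mul, coeff_monomial,
      if_pos rfl]
  constructor
  · intro hne hch
    apply hne
    rw [key]
    have hc0 : c = 0 := by rw [hcdef, hch, mul_zero]
    rw [hc0, map_zero, zero_mul, map_zero]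
  · intro hch
    rw [key]
    intro h0
    have hmem2 : MvPolynomial.C c * E ∈ Q := Ideal.Quotient.eq_zero_iff_mem.mp h0
    have hz := hcoeff _ hmem2
    rw [coeff_C_mul, hEco, mul_one] at hz
    have hc0 : c ≠ 0 := by
      rw [hcdef]
      exact mul_ne_zero (pow_ne_zero _ (neg_ne_zero.mpr one_ne_zero)) hch
    exact hc0 hz
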